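/- Let s ≥ 1 and let a, b : Fin s → ℕ with a ≠ b. The following are equivalent: (i) there exist positive reals k_1,…,k_s, l_1,…,l_s, κ_a, κ_b and two distinct points x, x' in the open positive orthant of ℝ^s such that f(x) = 0 and f(x') = 0, where f_i(z) = k_i − l_i z_i + ((b_i : ℝ) − (a_i : ℝ))(κ_a ∏_j z_j^{a_j} − κ_b ∏_j z_j^{b_j}); (ii) ∑_{i : a_i < b_i} a_i > 1 or ∑_{i : b_i < a_i} b_i > 1. -/

import Mathlib

/-- The mass-action steady-state map of the fully open network
`{0 ⇄ X_i (1 ≤ i ≤ s), ∑ a_i X_i ⇄ ∑ b_i X_i}` with one reversible non-flow reaction. -/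
noncomputable def revSteadyStateMap (s : ℕ) (a b : Fin s → ℕ) (k l : Fin s → ℝ)
    (κa κb : ℝ) (z : Fin s → ℝ) (i : Fin s) : ℝ :=
  k i - l i * z i +
    ((b i : ℝ) - (a i : ℝ)) * (κa * ∏ j, z j ^ (a j) - κb * ∏ j, z j ^ (b j))

open Finset Filter Topology

namespace RevMulti

variable {s : ℕ}

lemma div_pos_iff' {c l : ℝ} (hl : 0 < l) : 0 < c / l ↔ 0 < c := by
  constructor
  · intro h
    have := mul_pos h hl
    rwa [div_mul_cancel₀ _ (ne_of_gt hl)] at this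
  · intro h
    exact div_pos h hl

lemma div_neg_iff' {c l : ℝ} (hl : 0 < l) : c / l < 0 ↔ c < 0 := by
  constructor
  · intro h
    have := mul_neg_of_neg_of_pos h hl
    rwa [div_mul_cancel₀ _ (ne_of_gt hl)] at this
  · intro h
    exact div_neg_of_neg_of_pos h hl


noncomputable def lineF (p q : Fin s → ℝ) (a b : Fin s → ℕ) (κa κb : ℝ) (G : ℝ) : ℝ :=
  κa * ∏ i, (p i + q i * G) ^ (a i) - κb * ∏ i, (p i + q i * G) ^ (b i) - G

noncomputable def lineF' (p q : Fin s → ℝ) (a b : Fin s → ℕ) (κa κb : ℝ) (G : ℝ) : ℝ :=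
  κa * (∑ i, (∏ j ∈ univ.erase i, (p j + q j * G) ^ (a j)) *
      ((a i : ℝ) * (p i + q i * G) ^ (a i - 1) * q i))
  - κb * (∑ i, (∏ j ∈ univ.erase i, (p j + q j * G) ^ (b j)) *
      ((b i : ℝ) * (p i + q i * G) ^ (b i - 1) * q i)) - 1

lemma hasDerivAt_lineF (p q : Fin s → ℝ) (a b : Fin s → ℕ) (κa κb : ℝ) (G : ℝ) :
    HasDerivAt (lineF p q a b κa κb) (lineF' p q a b κa κb G) G := by
  have hz : ∀ (c : Fin s → ℕ) (i : Fin s),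
      HasDerivAt (fun G => (p i + q i * G) ^ (c i))
        ((c i : ℝ) * (p i + q i * G) ^ (c i - 1) * q i) G := by
    intro c i
    have h : HasDerivAt (fun G : ℝ => p i + q i * G) (q i) G := by
      simpa using ((hasDerivAt_id G).const_mul (q i)).const_add (p i)
    exact h.pow (c i)
  have hA : HasDerivAt (fun G => ∏ i, (p i + q i * G) ^ (a i))
      (∑ i, (∏ j ∈ univ.erase i, (p j + q j * G) ^ (a j)) *
        ((a i : ℝ) * (p i + q i * G) ^ (a i - 1) * q i)) G := by
    simpa [smul_eq_mul] using HasDerivAt.fun_finsetProd (u := univ) (fun i _ => hz a i)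
  have hB : HasDerivAt (fun G => ∏ i, (p i + q i * G) ^ (b i))
      (∑ i, (∏ j ∈ univ.erase i, (p j + q j * G) ^ (b j)) *
        ((b i : ℝ) * (p i + q i * G) ^ (b i - 1) * q i)) G := by
    simpa [smul_eq_mul] using HasDerivAt.fun_finsetProd (u := univ) (fun i _ => hz b i)
  exact ((hA.const_mul κa).sub (hB.const_mul κb)).sub (hasDerivAt_id G)

lemma continuous_lineF (p q : Fin s → ℝ) (a b : Fin s → ℕ) (κa κb : ℝ) :
    Continuous (lineF p q a b κa κb) :=
  continuous_iff_continuousAt.2 fun G => (hasDerivAt_lineF p q a b κa κb G).continuousAt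

lemma term_eq (z q κ : ℝ) (n : ℕ) (Pr : ℝ) (hz : z ≠ 0) :
    κ * (Pr * ((n : ℝ) * z ^ (n - 1) * q)) = q / z * (κ * (z ^ n * Pr) * n) := by
  cases n with
  | zero => simp
  | succ n =>
    have h : z ^ (n + 1) = z ^ n * z := pow_succ z n
    simp only [Nat.add_sub_cancel]
    field_simp
    ring

lemma lineF'_eq (p q : Fin s → ℝ) (a b : Fin s → ℕ) (κa κb : ℝ) (G : ℝ)
    (hz : ∀ i, p i + q i * G ≠ 0) :
    lineF' p q a b κa κb G =
      (∑ i, q i / (p i + q i * G) *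
        (κa * (∏ j, (p j + q j * G) ^ (a j)) * (a i) -
          κb * (∏ j, (p j + q j * G) ^ (b j)) * (b i))) - 1 := by
  unfold lineF'
  rw [Finset.mul_sum, Finset.mul_sum, ← Finset.sum_sub_distrib]
  congr 1
  apply Finset.sum_congr rfl
  intro i _
  rw [mul_sub]
  congr 1
  · rw [term_eq _ _ _ _ _ (hz i),
      Finset.mul_prod_erase univ (fun j => (p j + q j * G) ^ (a j)) (mem_univ i)]
  · rw [term_eq _ _ _ _ _ (hz i),
      Finset.mul_prod_erase univ (fun j => (p j + q j * G) ^ (b j)) (mem_univ i)]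




lemma key_nonneg (a b : Fin s → ℕ) (q z : Fin s → ℝ) (κa κb G : ℝ)
    (hz : ∀ i, 0 < z i) (hqG : ∀ i, q i * G < z i)
    (hqpos : ∀ i, 0 < q i ↔ a i < b i) (hqneg : ∀ i, q i < 0 ↔ b i < a i)
    (hκa : 0 < κa) (hκb : 0 < κb)
    (hG : G = κa * ∏ j, z j ^ a j - κb * ∏ j, z j ^ b j) (hG0 : 0 ≤ G)
    (hP : ∑ i ∈ univ.filter (fun i => a i < b i), a i ≤ 1) :
    ∑ i, q i / z i * (κa * (∏ j, z j ^ a j) * (a i) - κb * (∏ j, z j ^ b j) * (b i)) < 1 := by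
  set A := ∏ j, z j ^ a j with hAdef
  set B := ∏ j, z j ^ b j with hBdef
  have hA : 0 < A := Finset.prod_pos fun j _ => pow_pos (hz j) _
  have hB : 0 < B := Finset.prod_pos fun j _ => pow_pos (hz j) _
  have hq0 : ∀ i, a i = b i → q i = 0 := by
    intro i h
    rcases lt_trichotomy (q i) 0 with h1 | h1 | h1
    · exact absurd ((hqneg i).1 h1) (by omega)
    · exact h1
    · exact absurd ((hqpos i).1 h1) (by omega)
  rcases hG0.eq_or_lt with hG0' | hGpos
  · -- G = 0 case
    have hAB : κa * A = κb * B := by linarith [hG.symm.trans hG0'.symm]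
    have : ∀ i ∈ univ, q i / z i * (κa * A * (a i) - κb * B * (b i)) ≤ 0 := by
      intro i _
      have hzi := hz i
      rcases lt_trichotomy (a i) (b i) with h | h | h
      · have hq : 0 < q i := (hqpos i).2 h
        have hab : (a i : ℝ) < b i := by exact_mod_cast h
        have h3 : κa * A * (a i : ℝ) < κa * A * (b i : ℝ) :=
          mul_lt_mul_of_pos_left hab (by positivity)
        have h4 : κb * B * (b i : ℝ) = κa * A * (b i : ℝ) := by rw [hAB]
        have : κa * A * (a i) - κb * B * (b i) < 0 := by linarith
        exact le_of_lt (mul_neg_of_pos_of_neg (div_pos hq hzi) this)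
      · rw [hq0 i h]; simp
      · have hq : q i < 0 := (hqneg i).2 h
        have hab : (b i : ℝ) ≤ a i := by exact_mod_cast h.le
        have h4 : κb * B * (b i : ℝ) = κa * A * (b i : ℝ) := by rw [hAB]
        have h5 : κa * A * (b i : ℝ) ≤ κa * A * (a i : ℝ) :=
          mul_le_mul_of_nonneg_left hab (by positivity)
        have h2 : 0 ≤ κa * A * (a i) - κb * B * (b i) := by linarith
        exact mul_nonpos_of_nonpos_of_nonneg (le_of_lt (div_neg_of_neg_of_pos hq hzi)) h2
    have := Finset.sum_nonpos this
    linarith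
  · -- G > 0 case
    have hBA : κb * B < κa * A := by linarith
    -- per-term bounds
    have hbound : ∀ i, q i / z i * (κa * A * (a i) - κb * B * (b i)) ≤
        if a i < b i then (a i : ℝ) else 0 := by
      intro i
      have hzi := hz i
      rcases lt_trichotomy (a i) (b i) with h | h | h
      · rw [if_pos h]
        have hq : 0 < q i := (hqpos i).2 h
        have hba : (a i : ℝ) + 1 ≤ b i := by
          have : a i + 1 ≤ b i := h
          exact_mod_cast this
        have e5 : κb * B * ((a i : ℝ) + 1) ≤ κb * B * (b i : ℝ) :=
          mul_le_mul_of_nonneg_left hba (by positivity)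
        have e6 : (a i : ℝ) * G = κa * A * (a i) - κb * B * (a i) := by rw [hG]; ring
        have h2 : κa * A * (a i) - κb * B * (b i) ≤ (a i) * G - κb * B := by linarith
        have hqz : 0 < q i / z i := div_pos hq hzi
        rcases le_or_gt 0 ((a i : ℝ) * G - κb * B) with h3 | h3
        · have h1 : q i / z i < 1 / G := by
            rw [div_lt_div_iff₀ hzi hGpos]
            linarith [hqG i]
          have e1 := mul_le_mul_of_nonneg_left h2 hqz.le
          have e2 := mul_le_mul_of_nonneg_right h1.le h3
          have e3 : 1 / G * ((a i : ℝ) * G - κb * B) = (a i) - κb * B / G := by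
            field_simp
          have e4 : 0 < κb * B / G := div_pos (by positivity) hGpos
          linarith
        · have e1 := mul_le_mul_of_nonneg_left h2 hqz.le
          have e2 : q i / z i * ((a i : ℝ) * G - κb * B) < 0 :=
            mul_neg_of_pos_of_neg hqz h3
          have : (0:ℝ) ≤ a i := Nat.cast_nonneg _
          linarith
      · rw [if_neg (by omega), hq0 i h]; simp
      · rw [if_neg (by omega)]
        have hq : q i < 0 := (hqneg i).2 h
        have hab : (b i : ℝ) ≤ a i := by exact_mod_cast h.le
        have hb0 : (0:ℝ) ≤ b i := Nat.cast_nonneg _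
        have e1 : κb * B * (b i : ℝ) ≤ κa * A * (b i : ℝ) :=
          mul_le_mul_of_nonneg_right hBA.le hb0
        have e2 : κa * A * (b i : ℝ) ≤ κa * A * (a i : ℝ) :=
          mul_le_mul_of_nonneg_left hab (by positivity)
        have h2 : 0 ≤ κa * A * (a i) - κb * B * (b i) := by linarith
        exact mul_nonpos_of_nonpos_of_nonneg (le_of_lt (div_neg_of_neg_of_pos hq hzi)) h2
    -- strict bound on P
    have hstrict : ∀ i ∈ univ.filter (fun i => a i < b i),
        q i / z i * (κa * A * (a i) - κb * B * (b i)) < (a i : ℝ) := by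
      intro i hi
      rw [mem_filter] at hi
      have h := hi.2
      have hzi := hz i
      have hq : 0 < q i := (hqpos i).2 h
      have hba : (a i : ℝ) + 1 ≤ b i := by
        have : a i + 1 ≤ b i := h
        exact_mod_cast this
      have e5 : κb * B * ((a i : ℝ) + 1) ≤ κb * B * (b i : ℝ) :=
        mul_le_mul_of_nonneg_left hba (by positivity)
      have e6 : (a i : ℝ) * G = κa * A * (a i) - κb * B * (a i) := by rw [hG]; ring
      have h2 : κa * A * (a i) - κb * B * (b i) ≤ (a i) * G - κb * B := by linarith
      have hqz : 0 < q i / z i := div_pos hq hzi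
      rcases le_or_gt 0 ((a i : ℝ) * G - κb * B) with h3 | h3
      · have h1 : q i / z i < 1 / G := by
          rw [div_lt_div_iff₀ hzi hGpos]
          linarith [hqG i]
        have e1 := mul_le_mul_of_nonneg_left h2 hqz.le
        have e2 := mul_le_mul_of_nonneg_right h1.le h3
        have e3 : 1 / G * ((a i : ℝ) * G - κb * B) = (a i) - κb * B / G := by
          field_simp
        have e4 : 0 < κb * B / G := div_pos (by positivity) hGpos
        linarith
      · have e1 := mul_le_mul_of_nonneg_left h2 hqz.le
        have e2 : q i / z i * ((a i : ℝ) * G - κb * B) < 0 :=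
          mul_neg_of_pos_of_neg hqz h3
        have : (0:ℝ) ≤ a i := Nat.cast_nonneg _
        linarith
    -- combine
    rw [← Finset.sum_filter_add_sum_filter_not univ (fun i => a i < b i)]
    have hrest : ∑ i ∈ univ.filter (fun i => ¬ a i < b i),
        q i / z i * (κa * A * (a i) - κb * B * (b i)) ≤ 0 := by
      apply Finset.sum_nonpos
      intro i hi
      rw [mem_filter] at hi
      have := hbound i
      rwa [if_neg hi.2] at this
    have hPcast : ∑ i ∈ univ.filter (fun i => a i < b i), (a i : ℝ) ≤ 1 := by
      have : ((∑ i ∈ univ.filter (fun i => a i < b i), a i : ℕ) : ℝ) ≤ 1 := by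
        exact_mod_cast hP
      rwa [Nat.cast_sum] at this
    rcases (univ.filter (fun i => a i < b i)).eq_empty_or_nonempty with he | hne
    · rw [he]
      simp only [Finset.sum_empty]
      linarith
    · have h1 : ∑ i ∈ univ.filter (fun i => a i < b i),
          q i / z i * (κa * A * (a i) - κb * B * (b i)) <
          ∑ i ∈ univ.filter (fun i => a i < b i), (a i : ℝ) :=
        Finset.sum_lt_sum_of_nonempty hne hstrict
      linarith

lemma key (a b : Fin s → ℕ) (q z : Fin s → ℝ) (κa κb G : ℝ)
    (hz : ∀ i, 0 < z i) (hqG : ∀ i, q i * G < z i)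
    (hqpos : ∀ i, 0 < q i ↔ a i < b i) (hqneg : ∀ i, q i < 0 ↔ b i < a i)
    (hκa : 0 < κa) (hκb : 0 < κb)
    (hG : G = κa * ∏ j, z j ^ a j - κb * ∏ j, z j ^ b j)
    (hP : ∑ i ∈ univ.filter (fun i => a i < b i), a i ≤ 1)
    (hN : ∑ i ∈ univ.filter (fun i => b i < a i), b i ≤ 1) :
    ∑ i, q i / z i * (κa * (∏ j, z j ^ a j) * (a i) - κb * (∏ j, z j ^ b j) * (b i)) < 1 := by
  rcases le_or_gt 0 G with h | h
  · exact key_nonneg a b q z κa κb G hz hqG hqpos hqneg hκa hκb hG h hP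
  · have hswap := key_nonneg b a (fun i => -q i) z κb κa (-G) hz
      (fun i => by simpa [neg_mul_neg] using hqG i)
      (fun i => by simpa [neg_pos] using hqneg i)
      (fun i => by simpa [neg_neg_iff_pos, neg_lt_zero] using hqpos i)
      hκb hκa (by rw [hG]; ring) (by linarith) hN
    calc ∑ i, q i / z i * (κa * (∏ j, z j ^ a j) * (a i) - κb * (∏ j, z j ^ b j) * (b i))
        = ∑ i, (-q i) / z i *
          (κb * (∏ j, z j ^ b j) * (b i) - κa * (∏ j, z j ^ a j) * (a i)) := by
          apply Finset.sum_congr rfl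
          intro i _
          ring
      _ < 1 := hswap




/-- F is negative just to the right of a root with negative derivative. -/
lemma neg_right {F : ℝ → ℝ} {F' : ℝ → ℝ} (hF : ∀ x, HasDerivAt F (F' x) x)
    {r w : ℝ} (hrw : r < w) (hr : F r = 0) (hd : F' r < 0) :
    ∃ y, r < y ∧ y < w ∧ F y < 0 := by
  have hs := hasDerivAt_iff_tendsto_slope.mp (hF r)
  have h1 : ∀ᶠ y in 𝓝[≠] r, slope F r y < 0 := hs.eventually (eventually_lt_nhds hd)
  have h2 : ∀ᶠ y in 𝓝[>] r, slope F r y < 0 :=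
    h1.filter_mono (nhdsWithin_mono r (fun y hy => Set.mem_compl_singleton_iff.mpr (ne_of_gt hy)))
  have h3 : ∀ᶠ y in 𝓝[>] r, y < w :=
    eventually_nhdsWithin_of_eventually_nhds (eventually_lt_nhds hrw)
  have h4 : ∀ᶠ (y : ℝ) in 𝓝[>] r, r < y := eventually_mem_nhdsWithin
  obtain ⟨y, hy1, hy2, hy3⟩ := (h2.and (h3.and h4)).exists
  refine ⟨y, hy3, hy2, ?_⟩
  have hslope : (F y - F r) / (y - r) < 0 := by rwa [slope_def_field] at hy1
  rw [hr, sub_zero] at hslope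
  rcases div_neg_iff.mp hslope with ⟨_, h⟩ | ⟨h, _⟩
  · linarith
  · exact h

/-- F is positive just to the left of a root with negative derivative. -/
lemma pos_left {F : ℝ → ℝ} {F' : ℝ → ℝ} (hF : ∀ x, HasDerivAt F (F' x) x)
    {r w : ℝ} (hwr : w < r) (hr : F r = 0) (hd : F' r < 0) :
    ∃ y, w < y ∧ y < r ∧ 0 < F y := by
  have hs := hasDerivAt_iff_tendsto_slope.mp (hF r)
  have h1 : ∀ᶠ y in 𝓝[≠] r, slope F r y < 0 := hs.eventually (eventually_lt_nhds hd)
  have h2 : ∀ᶠ y in 𝓝[<] r, slope F r y < 0 :=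
    h1.filter_mono (nhdsWithin_mono r (fun y hy => Set.mem_compl_singleton_iff.mpr (ne_of_lt hy)))
  have h3 : ∀ᶠ y in 𝓝[<] r, w < y :=
    eventually_nhdsWithin_of_eventually_nhds (eventually_gt_nhds hwr)
  have h4 : ∀ᶠ (y : ℝ) in 𝓝[<] r, y < r := eventually_mem_nhdsWithin
  obtain ⟨y, hy1, hy2, hy3⟩ := (h2.and (h3.and h4)).exists
  refine ⟨y, hy2, hy3, ?_⟩
  have hslope : (F y - F r) / (y - r) < 0 := by rwa [slope_def_field] at hy1
  rw [hr, sub_zero] at hslope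
  rcases div_neg_iff.mp hslope with ⟨h, h'⟩ | ⟨h, h'⟩
  · linarith
  · linarith

lemma no_two_roots {F F' : ℝ → ℝ} (hF : ∀ x, HasDerivAt F (F' x) x)
    {u v : ℝ} (huv : u < v) (hu : F u = 0) (hv : F v = 0)
    (hroot : ∀ x, u ≤ x → x ≤ v → F x = 0 → F' x < 0) : False := by
  have hcont : Continuous F := continuous_iff_continuousAt.2 fun x => (hF x).continuousAt
  by_cases hall : ∀ x ∈ Set.Ioo u v, F x = 0
  · set w := (u + v) / 2 with hwdef
    have hw : w ∈ Set.Ioo u v := ⟨by simp [hwdef]; linarith, by simp [hwdef]; linarith⟩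
    have hev : F =ᶠ[𝓝 w] fun _ => (0:ℝ) :=
      Filter.eventually_of_mem (Ioo_mem_nhds hw.1 hw.2) hall
    have hF0 : HasDerivAt F 0 w := (hasDerivAt_const w (0:ℝ)).congr_of_eventuallyEq hev
    have := (hF w).unique hF0
    have hlt := hroot w (le_of_lt hw.1) (le_of_lt hw.2) (hall w hw)
    rw [this] at hlt
    exact lt_irrefl 0 hlt
  · push_neg at hall
    obtain ⟨w, hw, hFw⟩ := hall
    rcases (Ne.lt_or_gt hFw) with hneg | hpos
    · -- F w < 0 : look at the least root to the right of w
      set S := Set.Icc w v ∩ F ⁻¹' {0} with hSdef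
      have hScl : IsClosed S := isClosed_Icc.inter (isClosed_singleton.preimage hcont)
      have hScp : IsCompact S := isCompact_Icc.inter_right (isClosed_singleton.preimage hcont)
      have hSne : S.Nonempty := ⟨v, ⟨hw.2.le, le_refl v⟩, hv⟩
      set r := sInf S with hrdef
      have hrS : r ∈ S := hScp.sInf_mem hSne
      obtain ⟨⟨hwr, hrv⟩, hFr⟩ := hrS
      have hFr : F r = 0 := hFr
      have hwr' : w < r := lt_of_le_of_ne hwr (fun h => hFw (h ▸ hFr))
      have hd : F' r < 0 := hroot r (le_trans hw.1.le hwr) hrv hFr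
      obtain ⟨y, hy1, hy2, hy3⟩ := pos_left hF hwr' hFr hd
      -- IVT on [w, y] : F w < 0 < F y gives a root below r
      have hsub : Set.Ioo (F w) (F y) ⊆ F '' Set.Ioo w y :=
        intermediate_value_Ioo hy1.le hcont.continuousOn
      obtain ⟨c, hc, hFc⟩ := hsub ⟨hneg, hy3⟩
      have hcS : c ∈ S := ⟨⟨hc.1.le, le_trans (le_trans hc.2.le hy2.le) hrv⟩, hFc⟩
      have := csInf_le hScp.bddBelow hcS
      linarith [hc.2, hy2]
    · -- 0 < F w : look at the greatest root to the left of w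
      set S := Set.Icc u w ∩ F ⁻¹' {0} with hSdef
      have hScl : IsClosed S := isClosed_Icc.inter (isClosed_singleton.preimage hcont)
      have hScp : IsCompact S := isCompact_Icc.inter_right (isClosed_singleton.preimage hcont)
      have hSne : S.Nonempty := ⟨u, ⟨le_refl u, hw.1.le⟩, hu⟩
      set r := sSup S with hrdef
      have hrS : r ∈ S := hScp.sSup_mem hSne
      obtain ⟨⟨hur, hrw⟩, hFr⟩ := hrS
      have hFr : F r = 0 := hFr
      have hrw' : r < w := lt_of_le_of_ne hrw (fun h => hFw (h ▸ hFr))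
      have hd : F' r < 0 := hroot r hur (le_trans hrw hw.2.le) hFr
      obtain ⟨y, hy1, hy2, hy3⟩ := neg_right hF hrw' hFr hd
      -- IVT on [y, w] : F y < 0 < F w gives a root above r
      have hsub : Set.Ioo (F y) (F w) ⊆ F '' Set.Ioo y w :=
        intermediate_value_Ioo hy2.le hcont.continuousOn
      obtain ⟨c, hc, hFc⟩ := hsub ⟨hy3, hpos⟩
      have hcS : c ∈ S := ⟨⟨le_trans hur (le_trans hy1.le hc.1.le), hc.2.le⟩, hFc⟩
      have := le_csSup hScp.bddAbove hcS
      linarith [hc.1, hy1]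



lemma forward_aux (a b : Fin s → ℕ)
    (hP : ∑ i ∈ univ.filter (fun i => a i < b i), a i ≤ 1)
    (hN : ∑ i ∈ univ.filter (fun i => b i < a i), b i ≤ 1)
    (k l : Fin s → ℝ) (κa κb : ℝ) (x x' : Fin s → ℝ)
    (hk : ∀ i, 0 < k i) (hl : ∀ i, 0 < l i) (hκa : 0 < κa) (hκb : 0 < κb)
    (hx : ∀ i, 0 < x i) (hx' : ∀ i, 0 < x' i)
    (hfx : ∀ i, revSteadyStateMap s a b k l κa κb x i = 0)
    (hfx' : ∀ i, revSteadyStateMap s a b k l κa κb x' i = 0)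
    (hlt : κa * ∏ j, x' j ^ (a j) - κb * ∏ j, x' j ^ (b j) <
      κa * ∏ j, x j ^ (a j) - κb * ∏ j, x j ^ (b j)) : False := by
  set u := κa * ∏ j, x' j ^ (a j) - κb * ∏ j, x' j ^ (b j) with hudef
  set v := κa * ∏ j, x j ^ (a j) - κb * ∏ j, x j ^ (b j) with hvdef
  set p : Fin s → ℝ := fun i => k i / l i with hpdef
  set q : Fin s → ℝ := fun i => ((b i : ℝ) - (a i : ℝ)) / l i with hqdef
  have hp : ∀ i, 0 < p i := fun i => div_pos (hk i) (hl i)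
  have hqpos : ∀ i, 0 < q i ↔ a i < b i := by
    intro i
    rw [hqdef]
    rw [div_pos_iff' (hl i), sub_pos, Nat.cast_lt]
  have hqneg : ∀ i, q i < 0 ↔ b i < a i := by
    intro i
    rw [hqdef]
    rw [div_neg_iff' (hl i), sub_neg, Nat.cast_lt]
  have hx_eq : ∀ i, x i = p i + q i * v := by
    intro i
    have h := hfx i
    unfold revSteadyStateMap at h
    rw [← hvdef] at h
    have hli := (hl i).ne'
    rw [hpdef, hqdef]
    field_simp
    linarith
  have hx'_eq : ∀ i, x' i = p i + q i * u := by
    intro i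
    have h := hfx' i
    unfold revSteadyStateMap at h
    rw [← hudef] at h
    have hli := (hl i).ne'
    rw [hpdef, hqdef]
    field_simp
    linarith
  have hu0 : lineF p q a b κa κb u = 0 := by
    unfold lineF
    rw [Finset.prod_congr rfl (fun j _ => by rw [← hx'_eq j] :
          ∀ j ∈ Finset.univ, (p j + q j * u) ^ (a j) = x' j ^ (a j)),
        Finset.prod_congr rfl (fun j _ => by rw [← hx'_eq j] :
          ∀ j ∈ Finset.univ, (p j + q j * u) ^ (b j) = x' j ^ (b j)), ← hudef]
    ring
  have hv0 : lineF p q a b κa κb v = 0 := by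
    unfold lineF
    rw [Finset.prod_congr rfl (fun j _ => by rw [← hx_eq j] :
          ∀ j ∈ Finset.univ, (p j + q j * v) ^ (a j) = x j ^ (a j)),
        Finset.prod_congr rfl (fun j _ => by rw [← hx_eq j] :
          ∀ j ∈ Finset.univ, (p j + q j * v) ^ (b j) = x j ^ (b j)), ← hvdef]
    ring
  refine no_two_roots (hasDerivAt_lineF p q a b κa κb) hlt hu0 hv0 ?_
  intro r hur hrv hFr
  have hz : ∀ i, 0 < p i + q i * r := by
    intro i
    rcases le_or_gt 0 (q i) with h | h
    · have : q i * u ≤ q i * r := mul_le_mul_of_nonneg_left hur h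
      have := hx' i
      rw [hx'_eq i] at this
      linarith
    · have : q i * v ≤ q i * r := mul_le_mul_of_nonpos_left hrv h.le
      have := hx i
      rw [hx_eq i] at this
      linarith
  have hqG : ∀ i, q i * r < p i + q i * r := fun i => by linarith [hp i]
  have hG : r = κa * ∏ j, (p j + q j * r) ^ (a j) - κb * ∏ j, (p j + q j * r) ^ (b j) := by
    unfold lineF at hFr
    linarith
  have hkey := key a b q (fun i => p i + q i * r) κa κb r hz hqG hqpos hqneg hκa hκb hG hP hN
  rw [lineF'_eq p q a b κa κb r (fun i => (hz i).ne')]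
  try simp only at hkey
  linarith

lemma forward (a b : Fin s → ℕ)
    (hP : ∑ i ∈ univ.filter (fun i => a i < b i), a i ≤ 1)
    (hN : ∑ i ∈ univ.filter (fun i => b i < a i), b i ≤ 1)
    (k l : Fin s → ℝ) (κa κb : ℝ) (x x' : Fin s → ℝ)
    (hk : ∀ i, 0 < k i) (hl : ∀ i, 0 < l i) (hκa : 0 < κa) (hκb : 0 < κb)
    (hx : ∀ i, 0 < x i) (hx' : ∀ i, 0 < x' i)
    (hfx : ∀ i, revSteadyStateMap s a b k l κa κb x i = 0)
    (hfx' : ∀ i, revSteadyStateMap s a b k l κa κb x' i = 0) : x = x' := by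
  rcases lt_trichotomy (κa * ∏ j, x j ^ (a j) - κb * ∏ j, x j ^ (b j))
    (κa * ∏ j, x' j ^ (a j) - κb * ∏ j, x' j ^ (b j)) with hlt | heq | hlt
  · exact absurd (forward_aux a b hP hN k l κa κb x' x hk hl hκa hκb hx' hx hfx' hfx hlt) id
  · funext i
    have h := hfx i
    have h' := hfx' i
    unfold revSteadyStateMap at h h'
    rw [heq] at h
    have hli := (hl i).ne'
    nlinarith [hl i]
  · exact absurd (forward_aux a b hP hN k l κa κb x x' hk hl hκa hκb hx hx' hfx hfx' hlt) id

set_option maxHeartbeats 1000000 in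
lemma construct (a b : Fin s → ℕ)
    (hm : 1 < ∑ i ∈ Finset.univ.filter (fun i => a i < b i), a i) :
    ∃ (k l : Fin s → ℝ) (κa κb : ℝ) (x x' : Fin s → ℝ),
      (∀ i, 0 < k i) ∧ (∀ i, 0 < l i) ∧ 0 < κa ∧ 0 < κb ∧
      (∀ i, 0 < x i) ∧ (∀ i, 0 < x' i) ∧ x ≠ x' ∧
      (∀ i, revSteadyStateMap s a b k l κa κb x i = 0) ∧
      (∀ i, revSteadyStateMap s a b k l κa κb x' i = 0) := by
  classical
  set m := ∑ i ∈ Finset.univ.filter (fun i => a i < b i), a i with hmdef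
  set S := ∑ i ∈ Finset.univ.filter (fun i => ¬ a i < b i), a i with hSdef
  set T : ℝ := 2 ^ (m + 3) with hTdef
  have hT1 : (1:ℝ) < T := one_lt_pow₀ one_lt_two (by omega)
  have hTpos : (0:ℝ) < T := by linarith
  set δ : ℝ := 1 / (2 * T * (S + 1)) with hδdef
  have hδpos : 0 < δ := by positivity
  have hδT : δ * T = 1 / (2 * ((S:ℝ) + 1)) := by
    rw [hδdef]
    field_simp
    try ring
  have hS0 : (0:ℝ) ≤ S := Nat.cast_nonneg _
  have hδT2 : δ * T ≤ 1 / 2 := by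
    rw [hδT]
    rw [div_le_div_iff₀ (by positivity) (by norm_num)]
    linarith
  have hδhalf : δ ≤ 1 / 2 := by
    have h1 : δ * 1 ≤ δ * T := mul_le_mul_of_nonneg_left hT1.le hδpos.le
    linarith
  set q : Fin s → ℝ := fun i => if a i < b i then 1 else if b i < a i then -δ else 0 with hqdef
  have hzpos : ∀ G : ℝ, 0 ≤ G → G ≤ T → ∀ i, 0 < 1 + q i * G := by
    intro G h0 hT i
    rw [hqdef]
    by_cases h1 : a i < b i
    · simp only [if_pos h1]
      linarith
    · by_cases h2 : b i < a i
      · simp only [if_neg h1, if_pos h2]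
        have : δ * G ≤ δ * T := mul_le_mul_of_nonneg_left hT hδpos.le
        have : δ * G ≤ 1/2 := le_trans this hδT2
        nlinarith
      · simp only [if_neg h1, if_neg h2]
        norm_num
  set κa : ℝ := 1 / 2 ^ (m + 1) with hκadef
  have hκa : 0 < κa := by positivity
  -- bound A 1 from above
  have hA1 : ∏ i, (1 + q i * 1) ^ (a i) ≤ 2 ^ m := by
    rw [← Finset.prod_filter_mul_prod_filter_not Finset.univ (fun i => a i < b i)]
    have h1 : ∏ i ∈ Finset.univ.filter (fun i => a i < b i), (1 + q i * 1) ^ (a i)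
        = 2 ^ m := by
      rw [hmdef, ← Finset.prod_pow_eq_pow_sum]
      apply Finset.prod_congr rfl
      intro i hi
      rw [mem_filter] at hi
      rw [hqdef]
      simp only [if_pos hi.2]
      norm_num
    have h2 : ∏ i ∈ Finset.univ.filter (fun i => ¬ a i < b i), (1 + q i * 1) ^ (a i) ≤ 1 := by
      apply Finset.prod_le_one
      · intro i _
        exact pow_nonneg (le_of_lt (hzpos 1 (by norm_num) (by linarith) i)) _
      · intro i hi
        rw [mem_filter] at hi
        apply pow_le_one₀
        · have := hzpos 1 (by norm_num) (by linarith) i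
          linarith
        · rw [hqdef]
          simp only [if_neg hi.2]
          by_cases h2 : b i < a i
          · simp only [if_pos h2]
            linarith
          · simp only [if_neg h2]
            norm_num
    calc (∏ i ∈ Finset.univ.filter (fun i => a i < b i), (1 + q i * 1) ^ (a i)) *
          ∏ i ∈ Finset.univ.filter (fun i => ¬ a i < b i), (1 + q i * 1) ^ (a i)
        ≤ 2 ^ m * 1 :=
          mul_le_mul (le_of_eq h1) h2
            (Finset.prod_nonneg fun i _ =>
              pow_nonneg (le_of_lt (hzpos 1 (by norm_num) (by linarith) i)) _)
            (by positivity)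
      _ = 2 ^ m := by ring
  -- bound A T from below
  have hAT : T ^ m / 2 ≤ ∏ i, (1 + q i * T) ^ (a i) := by
    rw [← Finset.prod_filter_mul_prod_filter_not Finset.univ (fun i => a i < b i)]
    have h1 : T ^ m ≤ ∏ i ∈ Finset.univ.filter (fun i => a i < b i), (1 + q i * T) ^ (a i) := by
      have e1 : ∏ i ∈ Finset.univ.filter (fun i => a i < b i), (1 + q i * T) ^ (a i)
          = (1 + T) ^ m := by
        rw [hmdef, ← Finset.prod_pow_eq_pow_sum]
        apply Finset.prod_congr rfl
        intro i hi
        rw [mem_filter] at hi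
        rw [hqdef]
        simp only [if_pos hi.2]
        norm_num
      rw [e1]
      exact pow_le_pow_left₀ hTpos.le (by linarith) m
    have h2 : 1 / 2 ≤ ∏ i ∈ Finset.univ.filter (fun i => ¬ a i < b i), (1 + q i * T) ^ (a i) := by
      have e1 : ((1:ℝ) - δ * T) ^ S
          ≤ ∏ i ∈ Finset.univ.filter (fun i => ¬ a i < b i), (1 + q i * T) ^ (a i) := by
        rw [hSdef, ← Finset.prod_pow_eq_pow_sum]
        apply Finset.prod_le_prod
        · intro i _
          exact pow_nonneg (by linarith) _
        · intro i hi
          rw [mem_filter] at hi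
          rw [hqdef]
          simp only [if_neg hi.2]
          by_cases h2 : b i < a i
          · simp only [if_pos h2]
            apply le_of_eq
            ring_nf
          · simp only [if_neg h2]
            norm_num
            exact pow_le_one₀ (by linarith) (by nlinarith [mul_pos hδpos hTpos])
      have e2 : (1:ℝ) - (S:ℝ) * (δ * T) ≤ ((1:ℝ) - δ * T) ^ S := by
        have := one_add_mul_le_pow (a := -(δ * T)) (by linarith) S
        calc (1:ℝ) - (S:ℝ) * (δ * T) = 1 + (S:ℝ) * (-(δ * T)) := by ring
          _ ≤ (1 + -(δ * T)) ^ S := this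
          _ = ((1:ℝ) - δ * T) ^ S := by ring_nf
      have e3 : (S:ℝ) * (δ * T) ≤ 1 / 2 := by
        rw [hδT]
        rw [mul_one_div, div_le_div_iff₀ (by positivity) (by norm_num)]
        linarith
      linarith
    calc T ^ m / 2 = T ^ m * (1/2) := by ring
      _ ≤ (∏ i ∈ Finset.univ.filter (fun i => a i < b i), (1 + q i * T) ^ (a i)) *
          ∏ i ∈ Finset.univ.filter (fun i => ¬ a i < b i), (1 + q i * T) ^ (a i) :=
        mul_le_mul h1 h2 (by norm_num) (le_trans (by positivity) h1)
  -- κa * A T is large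
  have hκaAT : 2 * T ≤ κa * ∏ i, (1 + q i * T) ^ (a i) := by
    have hT2 : T ^ 2 ≤ T ^ m := pow_le_pow_right₀ hT1.le (by omega)
    have hTT : T ^ 2 = 2 * (2 ^ (m + 2) * T) := by
      rw [hTdef]
      rw [pow_two, pow_succ]
      ring
    have e1 : 2 ^ (m + 2) * T ≤ T ^ m / 2 := by linarith
    have e2 : κa * (2 ^ (m + 2) * T) = 2 * T := by
      rw [hκadef]
      have : (2:ℝ) ^ (m + 2) = 2 ^ (m + 1) * 2 := pow_succ 2 (m+1)
      rw [this]
      field_simp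
      try ring
    calc 2 * T = κa * (2 ^ (m + 2) * T) := e2.symm
      _ ≤ κa * (T ^ m / 2) := mul_le_mul_of_nonneg_left e1 hκa.le
      _ ≤ κa * ∏ i, (1 + q i * T) ^ (a i) := mul_le_mul_of_nonneg_left hAT hκa.le
  -- choose κb
  have hBTpos : 0 < ∏ i, (1 + q i * T) ^ (b i) :=
    Finset.prod_pos fun i _ => pow_pos (hzpos T (by linarith) le_rfl i) _
  set κb : ℝ := min (κa / 2) (T / (2 * ∏ i, (1 + q i * T) ^ (b i))) with hκbdef
  have hκb : 0 < κb := lt_min (by positivity) (by positivity)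
  have hκb1 : κb ≤ κa / 2 := min_le_left _ _
  have hκb2 : κb * ∏ i, (1 + q i * T) ^ (b i) ≤ T / 2 := by
    have h := min_le_right (κa / 2) (T / (2 * ∏ i, (1 + q i * T) ^ (b i)))
    calc κb * ∏ i, (1 + q i * T) ^ (b i)
        ≤ T / (2 * ∏ i, (1 + q i * T) ^ (b i)) * ∏ i, (1 + q i * T) ^ (b i) :=
          mul_le_mul_of_nonneg_right (hκbdef ▸ h) hBTpos.le
      _ = T / 2 := by rw [div_mul_eq_mul_div, mul_comm (2:ℝ), ← div_div, mul_div_assoc, div_self hBTpos.ne', mul_one]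
  -- sign changes of F := lineF 1 q a b κa κb
  have hF0 : 0 < lineF (fun _ => (1:ℝ)) q a b κa κb 0 := by
    unfold lineF
    simp only [mul_zero, add_zero, one_pow, Finset.prod_const_one]
    linarith
  have hB1pos : 0 < ∏ i, ((1:ℝ) + q i * 1) ^ (b i) :=
    Finset.prod_pos fun i _ => pow_pos (hzpos 1 (by norm_num) hT1.le i) _
  have hF1 : lineF (fun _ => (1:ℝ)) q a b κa κb 1 < 0 := by
    unfold lineF
    have e1 : κa * ∏ i, ((1:ℝ) + q i * 1) ^ (a i) ≤ 1 / 2 := by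
      have h := mul_le_mul_of_nonneg_left hA1 hκa.le
      have e2 : κa * 2 ^ m = 1 / 2 := by
        rw [hκadef, pow_succ]
        field_simp
      linarith
    have e3 : 0 < κb * ∏ i, ((1:ℝ) + q i * 1) ^ (b i) := mul_pos hκb hB1pos
    simp only
    linarith
  have hFT : 0 < lineF (fun _ => (1:ℝ)) q a b κa κb T := by
    unfold lineF
    simp only
    linarith
  -- two roots via IVT
  obtain ⟨ζ1, hζ1mem, hζ1⟩ : ∃ ζ ∈ Set.Ioo (0:ℝ) 1,
      lineF (fun _ => (1:ℝ)) q a b κa κb ζ = 0 := by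
    have h := intermediate_value_Ioo' (by norm_num : (0:ℝ) ≤ 1)
      ((continuous_lineF (fun _ => (1:ℝ)) q a b κa κb).continuousOn)
    obtain ⟨ζ, hζ, hFζ⟩ := h (Set.mem_Ioo.mpr ⟨hF1, hF0⟩)
    exact ⟨ζ, hζ, hFζ⟩
  obtain ⟨ζ2, hζ2mem, hζ2⟩ : ∃ ζ ∈ Set.Ioo (1:ℝ) T,
      lineF (fun _ => (1:ℝ)) q a b κa κb ζ = 0 := by
    have h := intermediate_value_Ioo hT1.le
      ((continuous_lineF (fun _ => (1:ℝ)) q a b κa κb).continuousOn)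
    obtain ⟨ζ, hζ, hFζ⟩ := h (Set.mem_Ioo.mpr ⟨hF1, hFT⟩)
    exact ⟨ζ, hζ, hFζ⟩
  obtain ⟨hζ1a, hζ1b⟩ := hζ1mem
  obtain ⟨hζ2a, hζ2b⟩ := hζ2mem
  have hgx : κa * ∏ j, ((1:ℝ) + q j * ζ1) ^ (a j) - κb * ∏ j, ((1:ℝ) + q j * ζ1) ^ (b j)
      = ζ1 := by
    unfold lineF at hζ1
    simp only at hζ1
    linarith
  have hgx' : κa * ∏ j, ((1:ℝ) + q j * ζ2) ^ (a j) - κb * ∏ j, ((1:ℝ) + q j * ζ2) ^ (b j)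
      = ζ2 := by
    unfold lineF at hζ2
    simp only at hζ2
    linarith
  -- define rates
  set l : Fin s → ℝ := fun i => if a i < b i then ((b i : ℝ) - a i)
    else if b i < a i then ((a i : ℝ) - b i) / δ else 1 with hldef
  have hl : ∀ i, 0 < l i := by
    intro i
    rw [hldef]
    by_cases h1 : a i < b i
    · simp only [if_pos h1]
      have : (a i : ℝ) < b i := by exact_mod_cast h1
      linarith
    · by_cases h2 : b i < a i
      · simp only [if_neg h1, if_pos h2]
        have h3 : (0:ℝ) < (a i : ℝ) - b i := by
          have : (b i : ℝ) < a i := by exact_mod_cast h2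
          linarith
        exact div_pos h3 hδpos
      · simp only [if_neg h1, if_neg h2]
        norm_num
  have hlq : ∀ i, ((b i : ℝ) - (a i : ℝ)) = l i * q i := by
    intro i
    rw [hldef, hqdef]
    by_cases h1 : a i < b i
    · simp only [if_pos h1]
      ring
    · by_cases h2 : b i < a i
      · simp only [if_neg h1, if_pos h2]
        field_simp
        ring
      · simp only [if_neg h1, if_neg h2]
        have : a i = b i := by omega
        rw [this]
        ring
  refine ⟨l, l, κa, κb, fun i => 1 + q i * ζ1, fun i => 1 + q i * ζ2,
    hl, hl, hκa, hκb, ?_, ?_, ?_, ?_, ?_⟩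
  · intro i
    exact hzpos ζ1 hζ1a.le (by linarith) i
  · intro i
    exact hzpos ζ2 (by linarith) hζ2b.le i
  · -- the two states differ
    have hPne : (Finset.univ.filter (fun i => a i < b i)).Nonempty := by
      by_contra h
      rw [Finset.not_nonempty_iff_eq_empty] at h
      rw [h, Finset.sum_empty] at hmdef
      omega
    obtain ⟨i0, hi0⟩ := hPne
    rw [mem_filter] at hi0
    intro h
    have h' := congrFun h i0
    try simp only at h'
    rw [hqdef] at h'
    simp only [if_pos hi0.2] at h'
    have : ζ1 = ζ2 := by linarith
    linarith
  · intro i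
    simp only [revSteadyStateMap]
    rw [hgx, hlq i]
    ring
  · intro i
    simp only [revSteadyStateMap]
    rw [hgx', hlq i]
    ring

end RevMulti

/-- A one-reaction fully open network with one reversible non-flow reaction
`∑ a_i X_i ⇄ ∑ b_i X_i` admits multiple positive mass-action steady states if and only if
`∑_{i : a_i < b_i} a_i > 1` or `∑_{i : b_i < a_i} b_i > 1`. -/
theorem rev_multistationary_iff (s : ℕ) (hs : 1 ≤ s) (a b : Fin s → ℕ) (hab : a ≠ b) :
    (∃ (k l : Fin s → ℝ) (κa κb : ℝ) (x x' : Fin s → ℝ),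
      (∀ i, 0 < k i) ∧ (∀ i, 0 < l i) ∧ 0 < κa ∧ 0 < κb ∧
      (∀ i, 0 < x i) ∧ (∀ i, 0 < x' i) ∧ x ≠ x' ∧
      (∀ i, revSteadyStateMap s a b k l κa κb x i = 0) ∧
      (∀ i, revSteadyStateMap s a b k l κa κb x' i = 0)) ↔
    (1 < ∑ i ∈ Finset.univ.filter (fun i => a i < b i), a i ∨
      1 < ∑ i ∈ Finset.univ.filter (fun i => b i < a i), b i) := by
  constructor
  · rintro ⟨k, l, κa, κb, x, x', hk, hl, hκa, hκb, hx, hx', hne, hfx, hfx'⟩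
    by_contra hcond
    push_neg at hcond
    obtain ⟨hP, hN⟩ := hcond
    exact hne (RevMulti.forward a b hP hN k l κa κb x x' hk hl hκa hκb hx hx' hfx hfx')
  · rintro (h | h)
    · exact RevMulti.construct a b h
    · obtain ⟨k, l, κa', κb', x, x', hk, hl, hκa', hκb', hx, hx', hne, hfx, hfx'⟩ :=
        RevMulti.construct b a h
      refine ⟨k, l, κb', κa', x, x', hk, hl, hκb', hκa', hx, hx', hne, ?_, ?_⟩
      · intro i
        have hthis := hfx i
        unfold revSteadyStateMap at hthis ⊢
        linear_combination hthis
      · intro i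
        have hthis := hfx' i
        unfold revSteadyStateMap at hthis ⊢
        linear_combination hthis
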